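/- A locally stratified propositional program with finitely many strata and finite clause bodies has a unique perfect model, obtained by the iterated construction N₀ = ⟨∅,∅⟩, N_{α+1} = ⟨Ψ_{N_α}^{↑ω}, 𝓑_{α+1} − Ψ_{N_α}^{↑ω}⟩, and this sequence is increasing in the Fitting ordering. -/

import Mathlib

/-- Literals: a positive atom or a negated atom (`true` = negated). -/
abbrev Lit (A : Type*) := Bool × A

/-- A literal is true under the partial interpretation J = ⟨T,F⟩ if it is a
positive atom in T or a negated atom whose atom is in F. -/
def litTrue {A : Type*} (J : Set A × Set A) : Lit A → Prop
  | (false, a) => a ∈ J.1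
  | (true, a) => a ∈ J.2

/-- Ψ_J(I) = { p : ∃ clause p ← L₁,…,Lₙ in P with each Lᵢ either true under J
or a positive atom in I }. -/
def Psi {A : Type*} (P : Set (A × List (Lit A))) (J : Set A × Set A)
    (I : Set A) : Set A :=
  {p | ∃ body, (p, body) ∈ P ∧
        ∀ L ∈ body, litTrue J L ∨ (L.1 = false ∧ L.2 ∈ I)}

/-- Finite iterates of Ψ_J from ∅. -/
def PsiIter {A : Type*} (P : Set (A × List (Lit A))) (J : Set A × Set A) :
    ℕ → Set A
  | 0 => ∅
  | n + 1 => Psi P J (PsiIter P J n)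

/-- Ψ_J^{↑ω}, the ω-iteration of Ψ_J from ∅. -/
def PsiOmega {A : Type*} (P : Set (A × List (Lit A))) (J : Set A × Set A) :
    Set A :=
  ⋃ n, PsiIter P J n

/-- 𝓑_α = ⋃_{β<α} S_β, the atoms in strata below α. -/
def Bup {A : Type*} (strat : A → ℕ) (α : ℕ) : Set A := {p | strat p < α}

/-- The iterated construction of the perfect model:
N₀ = ⟨∅,∅⟩, N_{α+1} = ⟨Ψ_{N_α}^{↑ω}, 𝓑_{α+1} − Ψ_{N_α}^{↑ω}⟩. -/
def N {A : Type*} (P : Set (A × List (Lit A))) (strat : A → ℕ) :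
    ℕ → Set A × Set A
  | 0 => (∅, ∅)
  | α + 1 => (PsiOmega P (N P strat α), Bup strat (α + 1) \ PsiOmega P (N P strat α))

section Aux
variable {A : Type*}

lemma psi_mono_I (P : Set (A × List (Lit A))) (J : Set A × Set A) {I I' : Set A}
    (h : I ⊆ I') : Psi P J I ⊆ Psi P J I' := by
  rintro p ⟨body, hb, hall⟩
  exact ⟨body, hb, fun L hL => (hall L hL).imp id (fun h2 => ⟨h2.1, h h2.2⟩)⟩

lemma litTrue_mono {J J' : Set A × Set A} (h1 : J.1 ⊆ J'.1) (h2 : J.2 ⊆ J'.2) :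
    ∀ L, litTrue J L → litTrue J' L
  | (false, _), h => h1 h
  | (true, _), h => h2 h

lemma psi_mono_J (P : Set (A × List (Lit A))) {J J' : Set A × Set A}
    (h1 : J.1 ⊆ J'.1) (h2 : J.2 ⊆ J'.2) (I : Set A) : Psi P J I ⊆ Psi P J' I := by
  rintro p ⟨body, hb, hall⟩
  exact ⟨body, hb, fun L hL => (hall L hL).imp (litTrue_mono h1 h2 L) id⟩

lemma psiIter_succ (P : Set (A × List (Lit A))) (J : Set A × Set A) :
    ∀ n, PsiIter P J n ⊆ PsiIter P J (n + 1)
  | 0 => by intro p h; exact absurd h (Set.notMem_empty p)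
  | n + 1 => psi_mono_I P J (psiIter_succ P J n)

lemma psiIter_mono_n (P : Set (A × List (Lit A))) (J : Set A × Set A)
    {m n : ℕ} (h : m ≤ n) : PsiIter P J m ⊆ PsiIter P J n := by
  induction n, h using Nat.le_induction with
  | base => exact subset_rfl
  | succ n h ih => exact ih.trans (psiIter_succ P J n)

lemma psiIter_mono_J (P : Set (A × List (Lit A))) {J J' : Set A × Set A}
    (h1 : J.1 ⊆ J'.1) (h2 : J.2 ⊆ J'.2) :
    ∀ n, PsiIter P J n ⊆ PsiIter P J' n
  | 0 => subset_rfl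
  | n + 1 => (psi_mono_I P J (psiIter_mono_J P h1 h2 n)).trans (psi_mono_J P h1 h2 _)

lemma psiOmega_mono_J (P : Set (A × List (Lit A))) {J J' : Set A × Set A}
    (h1 : J.1 ⊆ J'.1) (h2 : J.2 ⊆ J'.2) : PsiOmega P J ⊆ PsiOmega P J' := by
  intro p hp
  obtain ⟨s, ⟨n, rfl⟩, hn⟩ := hp
  exact Set.mem_iUnion.2 ⟨n, psiIter_mono_J P h1 h2 n hn⟩

lemma psiIter_subset_omega (P : Set (A × List (Lit A))) (J : Set A × Set A)
    (n : ℕ) : PsiIter P J n ⊆ PsiOmega P J :=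
  Set.subset_iUnion (PsiIter P J) n

/-- closure of PsiOmega under Psi -/
lemma psi_omega_closed (P : Set (A × List (Lit A))) (J : Set A × Set A) :
    Psi P J (PsiOmega P J) ⊆ PsiOmega P J := by
  rintro p ⟨body, hb, hall⟩
  have key : ∀ bd : List (Lit A),
      (∀ L ∈ bd, litTrue J L ∨ (L.1 = false ∧ L.2 ∈ PsiOmega P J)) →
      ∃ n, ∀ L ∈ bd, litTrue J L ∨ (L.1 = false ∧ L.2 ∈ PsiIter P J n) := by
    intro bd
    induction bd with
    | nil => intro _; exact ⟨0, fun L h => absurd h List.not_mem_nil⟩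
    | cons L bd ih =>
      intro h
      obtain ⟨n, hn⟩ := ih (fun L' hL' => h L' (List.mem_cons_of_mem _ hL'))
      rcases h L (List.mem_cons_self) with hL | ⟨hpos, hmem⟩
      · exact ⟨n, fun L' hL' => by
          rcases List.mem_cons.1 hL' with rfl | hL'
          · exact Or.inl hL
          · exact hn L' hL'⟩
      · obtain ⟨s, ⟨m, rfl⟩, hm⟩ := hmem
        refine ⟨max m n, fun L' hL' => ?_⟩
        rcases List.mem_cons.1 hL' with rfl | hL'
        · exact Or.inr ⟨hpos, psiIter_mono_n P J (le_max_left m n) hm⟩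
        · exact (hn L' hL').imp id
            (fun h2 => ⟨h2.1, psiIter_mono_n P J (le_max_right m n) h2.2⟩)
  obtain ⟨n, hn⟩ := key body hall
  exact psiIter_subset_omega P J (n + 1) ⟨body, hb, hn⟩

lemma step {A : Type*} (P : Set (A × List (Lit A))) (strat : A → ℕ)
    (hls : ∀ c ∈ P, ∀ L ∈ c.2,
      (L.1 = false → strat L.2 ≤ strat c.1) ∧
      (L.1 = true → strat L.2 < strat c.1)) :
    ∀ α, (N P strat α).1 ⊆ (N P strat (α + 1)).1 ∧
         (N P strat α).2 ⊆ (N P strat (α + 1)).2 := by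
  intro α
  induction α using Nat.strong_induction_on with
  | _ α ih =>
    match α with
    | 0 =>
      constructor <;> intro p hp <;> exact absurd hp (Set.notMem_empty p)
    | γ + 1 =>
      have hstepγ := ih γ (Nat.lt_succ_self γ)
      -- key claim: atoms of stratum < γ+1 derived at stage γ+2 were derived at stage γ+1
      have claim : ∀ n, ∀ p ∈ PsiIter P (N P strat (γ + 1)) n,
          strat p < γ + 1 → p ∈ PsiOmega P (N P strat γ) := by
        intro n
        induction n with
        | zero => intro p hp; exact absurd hp (Set.notMem_empty p)
        | succ n ihn =>
          rintro p ⟨body, hb, hall⟩ hpstrat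
          apply psi_omega_closed P (N P strat γ)
          refine ⟨body, hb, fun L hL => ?_⟩
          have hstratL := hls (p, body) hb L hL
          rcases hall L hL with hT | ⟨hpos, hmem⟩
          · -- true under N (γ+1)
            obtain ⟨b, a⟩ := L
            cases b with
            | false =>
              -- a ∈ (N (γ+1)).1 = PsiOmega (N γ)
              exact Or.inr ⟨rfl, hT⟩
            | true =>
              -- a ∈ (N (γ+1)).2 = Bup (γ+1) \ PsiOmega (N γ)
              have hastrat : strat a < strat p := hstratL.2 rfl
              left
              show a ∈ (N P strat γ).2
              match γ, hstepγ, ih with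
              | 0, _, _ =>
                exact absurd (hastrat.trans_le (Nat.lt_succ_iff.1 hpstrat))
                  (Nat.not_lt_zero _)
              | δ + 1, hstepγ, ih =>
                have hstepδ := ih δ (Nat.lt_succ_of_lt (Nat.lt_succ_self δ))
                have ha2 : a ∈ Bup strat (δ + 1 + 1) \
                    PsiOmega P (N P strat (δ + 1)) := hT
                refine ⟨hastrat.trans_le (Nat.lt_succ_iff.1 hpstrat), fun hc => ?_⟩
                exact ha2.2 (psiOmega_mono_J P hstepδ.1 hstepδ.2 hc)
          · -- positive atom derived at earlier iterate
            have : strat L.2 < γ + 1 :=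
              lt_of_le_of_lt (hstratL.1 hpos) hpstrat
            exact Or.inr ⟨hpos, ihn L.2 hmem this⟩
      constructor
      · -- T part
        exact psiOmega_mono_J P hstepγ.1 hstepγ.2
      · -- F part
        rintro p ⟨hp1, hp2⟩
        refine ⟨Nat.lt_succ_of_lt hp1, fun hc => hp2 ?_⟩
        obtain ⟨s, ⟨n, rfl⟩, hn⟩ := hc
        exact claim n p hn hp1
end Aux

/-- For a locally stratified propositional program with finitely many strata
(r strata) and finite clause bodies, the sequence N₀, N₁, …, N_r of the
iterated perfect-model construction is increasing in the Fitting ordering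
(T-components and F-components both increase). -/

theorem stmt16 {A : Type*} (P : Set (A × List (Lit A))) (strat : A → ℕ)
    (r : ℕ) (hfin : ∀ a : A, strat a < r)
    (hls : ∀ c ∈ P, ∀ L ∈ c.2,
      (L.1 = false → strat L.2 ≤ strat c.1) ∧
      (L.1 = true → strat L.2 < strat c.1)) :
    ∀ α β, α ≤ β → β ≤ r →
      (N P strat α).1 ⊆ (N P strat β).1 ∧ (N P strat α).2 ⊆ (N P strat β).2 := by
  intro α β hab h
  clear h hfin
  induction β, hab using Nat.le_induction with
  | base => exact ⟨subset_rfl, subset_rfl⟩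
  | succ β _ ihb =>
    have hs := step P strat hls β
    exact ⟨ihb.1.trans hs.1, ihb.2.trans hs.2⟩
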